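/- Let 𝔈 be the ring of Eisenstein integers, K the subfield of ℂ generated by 𝔈, and f : ℂ → 𝔈 a nearest integer algorithm for 𝔈. Let z ∈ ℂ \ K, let (a_n)_{n≥0} be the partial quotients of z with respect to f, and let (p_n), (q_n) be the Q-pair corresponding to (a_n). Then |q_{n+1}| > (3/2)·|q_{n−1}| for all n ≥ 1. -/

import Mathlib

/-- If |σ| ≤ 1/2, u ≥ 0 and |σ| + √3·u ≤ 1 then σ² + u² ≤ 1/3. -/
lemma eis_helper_su (s3 σ u : ℝ) (h3 : s3^2 = 3) (h3p : 0 < s3) (hσ : |σ| ≤ 1/2)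
    (hu : 0 ≤ u) (h : |σ| + s3 * u ≤ 1) : σ^2 + u^2 ≤ 1/3 := by
  have h1 : s3 * u ≤ 1 - |σ| := by linarith
  have h2 : (s3*u)^2 ≤ (1 - |σ|)^2 := by
    have := mul_nonneg h3p.le hu
    nlinarith
  have h4 : σ^2 = |σ|^2 := (sq_abs σ).symm
  nlinarith [abs_nonneg σ]

/-- No Eisenstein integer has norm 2. -/
lemma eis_norm_ne_two (x y : ℤ) : x^2 - x*y + y^2 ≠ 2 := by
  intro h
  have h4 : (2*x - y)^2 = 8 - 3*y^2 := by linear_combination 4*h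
  have hb1 : 2*y ≤ 3 := by nlinarith [sq_nonneg (y-1), sq_nonneg (2*x-y)]
  have hb2 : -3 ≤ 2*y := by nlinarith [sq_nonneg (y+1), sq_nonneg (2*x-y)]
  have hy1 : -1 ≤ y := by omega
  have hy2 : y ≤ 1 := by omega
  interval_cases y
  · have h5 : x*(x+1) = 1 := by linear_combination h
    rcases Int.isUnit_iff.mp (IsUnit.of_mul_eq_one _ h5) with rfl | rfl <;> norm_num at h5
  · have h5 : x*x = 2 := by linear_combination h
    have hc1 : x ≤ 2 := by nlinarith
    have hc2 : -2 ≤ x := by nlinarith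
    interval_cases x <;> norm_num at h5
  · have h5 : x*(x-1) = 1 := by linear_combination h
    have h6 : (x-1)*x = 1 := by linear_combination h5
    rcases Int.isUnit_iff.mp (IsUnit.of_mul_eq_one _ h6) with h7 | h7 <;> rw [h7] at h5 <;> omega

/-- The Eisenstein lattice has covering radius `1/√3`: every complex number is
within squared distance 1/3 of a lattice point. -/
lemma eis_cover (s3 : ℝ) (h3 : s3^2 = 3) (h3p : 0 < s3) (ω : ℂ)
    (hωre : ω.re = -(1/2)) (hωim : ω.im = s3/2) (w : ℂ) :
    ∃ x y : ℤ, Complex.normSq (w - ((x:ℂ) + (y:ℂ)*ω)) ≤ 1/3 := by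
  have hhalf : (0:ℝ) < s3/2 := by linarith
  have hnsq : ∀ x y : ℤ, Complex.normSq (w - ((x:ℂ) + (y:ℂ)*ω))
      = (w.re - x + y/2)^2 + (w.im - y*(s3/2))^2 := by
    intro x y
    rw [Complex.normSq_apply]
    simp only [Complex.sub_re, Complex.sub_im, Complex.add_re, Complex.add_im,
      Complex.mul_re, Complex.mul_im, Complex.intCast_re, Complex.intCast_im,
      hωre, hωim]
    ring
  obtain ⟨y0, hfl1, hfl2⟩ : ∃ y0 : ℤ, (y0:ℝ) ≤ w.im / (s3/2) ∧ w.im / (s3/2) < y0 + 1 :=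
    ⟨⌊w.im / (s3/2)⌋, Int.floor_le _, Int.lt_floor_add_one _⟩
  have hu0 : 0 ≤ w.im - y0 * (s3/2) := by
    have := (le_div_iff₀ hhalf).mp hfl1
    linarith
  have hu1 : w.im - y0 * (s3/2) ≤ s3/2 := by
    have := (div_lt_iff₀ hhalf).mp hfl2
    nlinarith
  obtain ⟨x0, hσb⟩ : ∃ x0 : ℤ, |w.re + (y0:ℝ)/2 - x0| ≤ 1/2 :=
    ⟨round (w.re + (y0:ℝ)/2), abs_sub_round _⟩
  rcases le_or_gt (|w.re + (y0:ℝ)/2 - x0| + s3 * (w.im - y0 * (s3/2))) 1 with hcase | hcase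
  · refine ⟨x0, y0, ?_⟩
    rw [hnsq]
    have h1 : w.re - (x0:ℝ) + (y0:ℝ)/2 = w.re + (y0:ℝ)/2 - x0 := by ring
    rw [h1]
    exact eis_helper_su s3 _ _ h3 h3p hσb hu0 hcase
  · rcases le_or_gt 0 (w.re + (y0:ℝ)/2 - x0) with hc | hc
    · refine ⟨x0 + 1, y0 + 1, ?_⟩
      rw [hnsq]
      rw [abs_of_nonneg hc] at hσb hcase
      have h1 : w.re - ((x0:ℤ)+1:ℤ) + (((y0:ℤ)+1:ℤ):ℝ)/2
          = (w.re + (y0:ℝ)/2 - x0) - 1/2 := by push_cast; ring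
      have h2 : w.im - (((y0:ℤ)+1:ℤ):ℝ)*(s3/2) = -(s3/2 - (w.im - y0*(s3/2))) := by
        push_cast; ring
      rw [h1, h2]
      have h3' : (-(s3/2 - (w.im - y0*(s3/2))))^2 = (s3/2 - (w.im - y0*(s3/2)))^2 := by ring
      rw [h3']
      apply eis_helper_su s3 _ _ h3 h3p
      · rw [abs_of_nonpos (by linarith)]; linarith
      · linarith
      · rw [abs_of_nonpos (by linarith)]; nlinarith
    · refine ⟨x0, y0 + 1, ?_⟩
      rw [hnsq]
      rw [abs_of_neg hc] at hσb hcase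
      have h1 : w.re - (x0:ℝ) + (((y0:ℤ)+1:ℤ):ℝ)/2
          = (w.re + (y0:ℝ)/2 - x0) + 1/2 := by push_cast; ring
      have h2 : w.im - (((y0:ℤ)+1:ℤ):ℝ)*(s3/2) = -(s3/2 - (w.im - y0*(s3/2))) := by
        push_cast; ring
      rw [h1, h2]
      have h3' : (-(s3/2 - (w.im - y0*(s3/2))))^2 = (s3/2 - (w.im - y0*(s3/2)))^2 := by ring
      rw [h3']
      apply eis_helper_su s3 _ _ h3 h3p
      · rw [abs_of_nonneg (by linarith)]; linarith
      · linarith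
      · rw [abs_of_nonneg (by linarith)]; nlinarith

/-- Exponential growth of denominators for the nearest integer algorithm over
the Eisenstein integers: `|q₍ₙ₊₁₎| > (3/2)|q₍ₙ₋₁₎|` for all `n ≥ 1`.
(Q-pairs are indexed with offset one, so `q (n+1) = qₙ`.) -/
theorem eisenstein_nearest_exponential_growth
    (ω : ℂ) (hω : ω = -(1 / 2) + (Real.sqrt 3 / 2) * Complex.I)
    (E : Set ℂ) (hE : E = {w : ℂ | ∃ x y : ℤ, w = (x : ℂ) + (y : ℂ) * ω})
    (f : ℂ → ℂ) (hfE : ∀ w, f w ∈ E)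
    (hnear : ∀ w : ℂ, ∀ b ∈ E, ‖w - f w‖ ≤ ‖w - b‖)
    (K : Subfield ℂ) (hK : K = Subfield.closure E)
    (z : ℂ) (hzK : z ∉ K)
    (zs : ℕ → ℂ) (hzs0 : zs 0 = z)
    (hzsrec : ∀ n, zs (n + 1) = (zs n - f (zs n))⁻¹)
    (a : ℕ → ℂ) (ha : ∀ n, a n = f (zs n))
    (p q : ℕ → ℂ)
    (hp0 : p 0 = 1) (hp1 : p 1 = a 0)
    (hp : ∀ n, p (n + 2) = a (n + 1) * p (n + 1) + p n)
    (hq0 : q 0 = 0) (hq1 : q 1 = 1)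
    (hq : ∀ n, q (n + 2) = a (n + 1) * q (n + 1) + q n) :
    ∀ n : ℕ, 1 ≤ n → 3 / 2 * ‖q n‖ < ‖q (n + 2)‖ := by
  have hs3 : (Real.sqrt 3)^2 = 3 := Real.sq_sqrt (by norm_num)
  have hs3p : (0:ℝ) < Real.sqrt 3 := Real.sqrt_pos.mpr (by norm_num)
  set s3 : ℝ := Real.sqrt 3 with hs3def
  have hωre : ω.re = -(1/2) := by rw [hω]; simp
  have hωim : ω.im = s3/2 := by rw [hω]; simp
  -- covering property of the nearest integer algorithm
  have cover' : ∀ w : ℂ, s3 * ‖w - f w‖ ≤ 1 := by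
    intro w
    obtain ⟨x, y, hxy⟩ := eis_cover s3 hs3 hs3p ω hωre hωim w
    have hbE : ((x:ℂ) + (y:ℂ)*ω) ∈ E := by rw [hE]; exact ⟨x, y, rfl⟩
    have h1 : ‖w - f w‖ ≤ ‖w - ((x:ℂ)+(y:ℂ)*ω)‖ := hnear w _ hbE
    have h2 : ‖w - ((x:ℂ)+(y:ℂ)*ω)‖^2 ≤ 1/3 := by
      rw [Complex.sq_norm]; exact hxy
    have h3 : 0 ≤ ‖w - ((x:ℂ)+(y:ℂ)*ω)‖ := norm_nonneg _
    have h4 : 0 ≤ ‖w - f w‖ := norm_nonneg _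
    have h5 : s3 * ‖w - f w‖ ≤ s3 * ‖w - ((x:ℂ)+(y:ℂ)*ω)‖ :=
      mul_le_mul_of_nonneg_left h1 hs3p.le
    have h6 : (s3 * ‖w - ((x:ℂ)+(y:ℂ)*ω)‖)^2 ≤ 1 := by
      rw [mul_pow, hs3]; linarith
    have h7 : 0 ≤ s3 * ‖w - ((x:ℂ)+(y:ℂ)*ω)‖ := mul_nonneg hs3p.le h3
    have h8 : s3 * ‖w - ((x:ℂ)+(y:ℂ)*ω)‖ ≤ 1 := by nlinarith
    linarith
  -- irrationality of all iterates
  have hEK : ∀ b ∈ E, b ∈ K := by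
    intro b hb
    rw [hK]
    exact Subfield.subset_closure hb
  have hzsK : ∀ m, zs m ∉ K := by
    intro m
    induction m with
    | zero => rw [hzs0]; exact hzK
    | succ m ih =>
      rw [hzsrec m]
      intro hmem
      have hfK : f (zs m) ∈ K := hEK _ (hfE (zs m))
      have hsub : zs m - f (zs m) ∉ K := by
        intro h
        exact ih (by simpa using add_mem h hfK)
      have : zs m - f (zs m) ∈ K := by
        have h5 := inv_mem hmem
        rwa [inv_inv] at h5
      exact hsub this
  have hne : ∀ m, zs m - f (zs m) ≠ 0 := by
    intro m h0
    have hfK : f (zs m) ∈ K := hEK _ (hfE (zs m))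
    have : zs m = f (zs m) := by rwa [sub_eq_zero] at h0
    exact hzsK m (this ▸ hfK)
  have hzz : ∀ m, zs (m+1) * (zs m - a m) = 1 := by
    intro m
    rw [ha m, hzsrec m]
    exact inv_mul_cancel₀ (hne m)
  -- basic bounds
  have habs_zz : ∀ m, ‖zs (m+1)‖ * ‖zs m - a m‖ = 1 := by
    intro m
    rw [← norm_mul, hzz m, norm_one]
  have hcov : ∀ m, s3 * ‖zs m - a m‖ ≤ 1 := by
    intro m
    rw [ha m]
    exact cover' (zs m)
  have hzlb : ∀ m, s3 ≤ ‖zs (m+1)‖ := by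
    intro m
    have h1 := habs_zz m
    have h2 := hcov m
    have hBpos : 0 < ‖zs m - a m‖ := by
      rcases (norm_nonneg (zs m - a m)).lt_or_eq with h | h
      · exact h
      · exfalso
        rw [← h, mul_zero] at h1
        norm_num at h1
    nlinarith [norm_nonneg (zs (m+1))]
  -- partial quotients have absolute value at least √3
  have ha_lb : ∀ m, s3 ≤ ‖a (m+1)‖ := by
    intro m
    have h1 := hzlb m
    have h2 := hcov (m+1)
    have htri : ‖zs (m+1)‖ ≤ ‖a (m+1)‖ + ‖zs (m+1) - a (m+1)‖ := by
      have h5 := norm_add_le (a (m+1)) (zs (m+1) - a (m+1))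
      simpa using h5
    have habs2 : 2 ≤ s3 * ‖a (m+1)‖ := by
      have h4 := mul_le_mul_of_nonneg_left htri hs3p.le
      have h5 := mul_le_mul_of_nonneg_left h1 hs3p.le
      nlinarith
    obtain ⟨x, y, hxy⟩ : ∃ x y : ℤ, a (m+1) = (x:ℂ) + (y:ℂ)*ω := by
      have hmem := hfE (zs (m+1))
      rw [hE] at hmem
      obtain ⟨x, y, hxy⟩ := hmem
      exact ⟨x, y, by rw [ha]; exact hxy⟩
    have hNS : Complex.normSq (a (m+1)) = ((x^2 - x*y + y^2 : ℤ) : ℝ) := by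
      rw [hxy, Complex.normSq_apply]
      simp only [Complex.add_re, Complex.add_im, Complex.mul_re, Complex.mul_im,
        Complex.intCast_re, Complex.intCast_im, hωre, hωim]
      push_cast
      linear_combination ((y:ℝ)^2/4) * hs3
    have habs_nn : 0 ≤ ‖a (m+1)‖ := norm_nonneg _
    have he1 : (s3 * ‖a (m+1)‖)^2 = 3 * ‖a (m+1)‖^2 := by
      rw [mul_pow, hs3]
    have hgt1 : (1:ℤ) < x^2 - x*y + y^2 := by
      have h6 : (4:ℝ) ≤ 3 * Complex.normSq (a (m+1)) := by
        rw [← Complex.sq_norm]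
        nlinarith
      rw [hNS] at h6
      by_contra hcon
      push_neg at hcon
      have h7 : ((x^2 - x*y + y^2 : ℤ):ℝ) ≤ 1 := by exact_mod_cast hcon
      linarith
    have hge3 : (3:ℤ) ≤ x^2 - x*y + y^2 := by
      have h8 := eis_norm_ne_two x y
      omega
    have hNS3 : (3:ℝ) ≤ Complex.normSq (a (m+1)) := by
      rw [hNS]
      exact_mod_cast hge3
    nlinarith [Complex.sq_norm (a (m+1))]
  -- the G-sequence recursion : G (m+1) = zs (m+2) * G m
  have hGA : ∀ m, q (m+2) * zs (m+2) + q (m+1) = zs (m+2) * (q (m+1) * zs (m+1) + q m) := by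
    intro m
    linear_combination zs (m+2) * hq m - q (m+1) * hzz (m+1)
  -- lower bound on G
  have hGlb : ∀ m, s3 ≤ ‖q (m+1) * zs (m+1) + q m‖ := by
    intro m
    induction m with
    | zero =>
      have h0 : q 1 * zs 1 + q 0 = zs 1 := by rw [hq0, hq1]; ring
      rw [h0]
      exact hzlb 0
    | succ m ih =>
      rw [hGA m, norm_mul]
      have hGnn : 0 ≤ ‖q (m+1) * zs (m+1) + q m‖ := norm_nonneg _
      have p1 : s3 * ‖q (m+1) * zs (m+1) + q m‖
          ≤ ‖zs (m+2)‖ * ‖q (m+1) * zs (m+1) + q m‖ :=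
        mul_le_mul_of_nonneg_right (hzlb (m+1)) hGnn
      have p2 : s3 * s3 ≤ s3 * ‖q (m+1) * zs (m+1) + q m‖ :=
        mul_le_mul_of_nonneg_left ih hs3p.le
      have p3 : s3 ≤ s3 * s3 := by nlinarith
      linarith
  have hGstep : ∀ m, s3 * ‖q (m+1) * zs (m+1) + q m‖
      ≤ ‖q (m+2) * zs (m+2) + q (m+1)‖ := by
    intro m
    rw [hGA m, norm_mul]
    exact mul_le_mul_of_nonneg_right (hzlb (m+1)) (norm_nonneg _)
  -- triangle bound for q (m+2)
  have hQup : ∀ m, ‖q (m+2)‖ ≤ ‖q (m+1) * zs (m+1) + q m‖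
      + ‖q (m+1)‖ * ‖zs (m+1) - a (m+1)‖ := by
    intro m
    have hid : q (m+2) = (q (m+1) * zs (m+1) + q m) - q (m+1) * (zs (m+1) - a (m+1)) := by
      linear_combination hq m
    rw [hid, ← norm_mul]
    exact norm_sub_le _ _
  -- key inequality : 2|q (m+1)| ≤ √3 |G m|
  have hE2 : ∀ m, 2 * ‖q (m+1)‖ ≤ s3 * ‖q (m+1) * zs (m+1) + q m‖ := by
    intro m
    induction m with
    | zero =>
      have h0 : q 1 * zs 1 + q 0 = zs 1 := by rw [hq0, hq1]; ring
      rw [h0, hq1, norm_one]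
      nlinarith [hzlb 0]
    | succ m ih =>
      have key : 2 * (‖q (m+1)‖ * ‖zs (m+1) - a (m+1)‖)
          ≤ ‖q (m+1) * zs (m+1) + q m‖ := by
        have h9 : s3 * (2 * (‖q (m+1)‖ * ‖zs (m+1) - a (m+1)‖))
            ≤ s3 * ‖q (m+1) * zs (m+1) + q m‖ := by
          have t5 : ‖q (m+1)‖ * (s3 * ‖zs (m+1) - a (m+1)‖)
              ≤ ‖q (m+1)‖ * 1 :=
            mul_le_mul_of_nonneg_left (hcov (m+1)) (norm_nonneg _)
          nlinarith [ih]
        exact le_of_mul_le_mul_left h9 hs3p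
      have t4 : 3 * ‖q (m+1) * zs (m+1) + q m‖
          ≤ s3 * ‖q (m+2) * zs (m+2) + q (m+1)‖ := by
        have t4' := mul_le_mul_of_nonneg_left (hGstep m) hs3p.le
        calc 3 * ‖q (m+1) * zs (m+1) + q m‖
            = s3 * (s3 * ‖q (m+1) * zs (m+1) + q m‖) := by
              rw [← mul_assoc, ← sq, hs3]
          _ ≤ s3 * ‖q (m+2) * zs (m+2) + q (m+1)‖ := t4'
      have h10 := hQup m
      linarith
  -- the crucial identity for q (m+3)
  have hQC : ∀ m, q (m+3) = a (m+2) * (q (m+1) * zs (m+1) + q m)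
      + q (m+1) * ((zs (m+1) - a (m+1)) * (zs (m+2) - a (m+2))) := by
    intro m
    linear_combination hq (m+1) + a (m+2) * hq m - q (m+1) * hzz (m+1)
  -- finish
  intro n hn
  obtain ⟨m, rfl⟩ : ∃ m, n = m + 1 := ⟨n - 1, by omega⟩
  show 3 / 2 * ‖q (m+1)‖ < ‖q (m+3)‖
  have hT : s3 * ‖q (m+1) * zs (m+1) + q m‖
      ≤ ‖a (m+2)‖ * ‖q (m+1) * zs (m+1) + q m‖ :=
    mul_le_mul_of_nonneg_right (ha_lb (m+1)) (norm_nonneg _)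
  have hid : a (m+2) * (q (m+1) * zs (m+1) + q m)
      = q (m+3) - q (m+1) * ((zs (m+1) - a (m+1)) * (zs (m+2) - a (m+2))) := by
    linear_combination -1 * hQC m
  have htri : ‖a (m+2)‖ * ‖q (m+1) * zs (m+1) + q m‖
      ≤ ‖q (m+3)‖ + ‖q (m+1)‖ *
        (‖zs (m+1) - a (m+1)‖ * ‖zs (m+2) - a (m+2)‖) := by
    rw [← norm_mul, ← norm_mul, ← norm_mul, hid]
    exact norm_sub_le _ _
  have heps : 3 * (‖zs (m+1) - a (m+1)‖ * ‖zs (m+2) - a (m+2)‖) ≤ 1 := by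
    have c1 := hcov (m+1)
    have c2 := hcov (m+2)
    nlinarith [norm_nonneg (zs (m+1) - a (m+1)),
      norm_nonneg (zs (m+2) - a (m+2))]
  have hq_nn : 0 ≤ ‖q (m+1)‖ := norm_nonneg _
  have hXE : ‖q (m+1)‖ *
      (3 * (‖zs (m+1) - a (m+1)‖ * ‖zs (m+2) - a (m+2)‖))
      ≤ ‖q (m+1)‖ * 1 := mul_le_mul_of_nonneg_left heps hq_nn
  have hG3 : 3 ≤ s3 * ‖q (m+1) * zs (m+1) + q m‖ := by
    nlinarith [hGlb m]
  have hE2m := hE2 m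
  nlinarith [hT, htri, hXE, hG3, hE2m, hq_nn]
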